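/- Let n ≥ 1 be an integer and M a random variable that is chi-squared distributed with n degrees of freedom. Then the law of M/n (the distribution of the variance estimator from the theoretical perspective, up to the scale σ²) is not equal to the law of n/M (the fiducial parameter distribution from the undertaking's perspective, up to the scale σ̂²). -/

import Mathlib

open MeasureTheory ProbabilityTheory

section Aux
open scoped ENNReal
open Real Set

lemma aux_lintegral_inv_Ioo_top : ∫⁻ x in Ioo (0:ℝ) 1, ENNReal.ofReal x⁻¹ = ∞ := by
  by_contra h
  have hint : IntegrableOn (fun x : ℝ => x⁻¹) (Ioo 0 1) := by
    constructor
    · exact measurable_inv.aestronglyMeasurable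
    · rw [hasFiniteIntegral_iff_ofReal]
      · exact Ne.lt_top h
      · filter_upwards [ae_restrict_mem measurableSet_Ioo] with x hx
        exact (inv_pos.mpr hx.1).le
  have hint2 : IntegrableOn (fun x : ℝ => x ^ (-1 : ℝ)) (Ioo 0 1) := by
    refine hint.congr_fun (fun x hx => ?_) measurableSet_Ioo
    rw [Real.rpow_neg_one]
  rw [intervalIntegral.integrableOn_Ioo_rpow_iff one_pos] at hint2
  linarith

lemma aux_gamma_moment {a r : ℝ} (ha : 0 < a) (hr : 0 < r) :
    ∫⁻ x, ENNReal.ofReal x ∂(gammaMeasure a r) = ENNReal.ofReal (a / r) := by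
  have hg : Measurable (gammaPDF a r) := (measurable_gammaPDFReal a r).ennreal_ofReal
  have hg2 : Measurable (gammaPDF (a + 1) r) := (measurable_gammaPDFReal _ r).ennreal_ofReal
  rw [gammaMeasure, lintegral_withDensity_eq_lintegral_mul _ hg ENNReal.measurable_ofReal]
  have key : ∀ x : ℝ, (gammaPDF a r * fun x => ENNReal.ofReal x) x
      = ENNReal.ofReal (a / r) * gammaPDF (a + 1) r x := by
    intro x
    rcases lt_trichotomy x 0 with hx | hx | hx
    · simp [gammaPDF_of_neg hx]
    · subst hx
      rw [Pi.mul_apply, gammaPDF_of_nonneg le_rfl, gammaPDF_of_nonneg le_rfl,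
        show a + 1 - 1 = a by ring, Real.zero_rpow ha.ne']
      simp
    · rw [Pi.mul_apply, gammaPDF_of_nonneg hx.le, gammaPDF_of_nonneg hx.le,
        ← ENNReal.ofReal_mul (by positivity),
        ← ENNReal.ofReal_mul (div_nonneg ha.le hr.le)]
      congr 1
      have hΓ : Real.Gamma (a + 1) = a * Real.Gamma a := Real.Gamma_add_one ha.ne'
      have hr1 : r ^ (a + 1) = r ^ a * r := Real.rpow_add_one hr.ne' a
      have hx1 : x ^ (a + 1 - 1) = x ^ (a - 1) * x := by
        rw [show a + 1 - 1 = a - 1 + 1 by ring]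
        exact Real.rpow_add_one hx.ne' (a - 1)
      rw [hΓ, hr1, hx1]
      have hΓ0 : Real.Gamma a ≠ 0 := (Real.Gamma_pos_of_pos ha).ne'
      field_simp
  simp_rw [key]
  rw [lintegral_const_mul _ hg2, lintegral_gammaPDF_eq_one (by linarith) hr, mul_one]

lemma aux_gamma_inv_moment {a r : ℝ} (ha : 1 < a) (hr : 0 < r) :
    ∫⁻ x, ENNReal.ofReal x⁻¹ ∂(gammaMeasure a r) = ENNReal.ofReal (r / (a - 1)) := by
  have ha0 : 0 < a := by linarith
  have ha1 : a - 1 ≠ 0 := by intro h; rw [sub_eq_zero] at h; exact absurd ha (by simp [h])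
  have hg : Measurable (gammaPDF a r) := (measurable_gammaPDFReal a r).ennreal_ofReal
  have hg2 : Measurable (gammaPDF (a - 1) r) := (measurable_gammaPDFReal _ r).ennreal_ofReal
  have hf : Measurable fun x : ℝ => ENNReal.ofReal x⁻¹ := measurable_inv.ennreal_ofReal
  rw [gammaMeasure, lintegral_withDensity_eq_lintegral_mul _ hg hf]
  have key : ∀ᵐ x : ℝ, (gammaPDF a r * fun x => ENNReal.ofReal x⁻¹) x
      = ENNReal.ofReal (r / (a - 1)) * gammaPDF (a - 1) r x := by
    have h0 : ∀ᵐ x : ℝ, x ≠ 0 := by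
      refine ae_iff.mpr ?_
      simp only [ne_eq, not_not, setOf_eq_eq_singleton]
      exact measure_singleton 0
    filter_upwards [h0] with x hx0
    rcases lt_or_gt_of_ne hx0 with hx | hx
    · simp [gammaPDF_of_neg hx]
    · rw [Pi.mul_apply, gammaPDF_of_nonneg hx.le, gammaPDF_of_nonneg hx.le,
        ← ENNReal.ofReal_mul (by positivity),
        ← ENNReal.ofReal_mul (div_nonneg hr.le (by linarith))]
      congr 1
      have hΓ : Real.Gamma a = (a - 1) * Real.Gamma (a - 1) := by
        have h := Real.Gamma_add_one ha1
        rw [sub_add_cancel] at h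
        exact h
      have hr1 : r ^ a = r ^ (a - 1) * r := by
        rw [show a = a - 1 + 1 by ring]
        rw [show a - 1 + 1 - 1 = a - 1 by ring]
        exact Real.rpow_add_one hr.ne' (a - 1)
      have hx1 : x ^ (a - 1) = x ^ (a - 1 - 1) * x := by
        rw [show a - 1 = a - 1 - 1 + 1 by ring]
        rw [show a - 1 - 1 + 1 - 1 = a - 1 - 1 by ring]
        exact Real.rpow_add_one hx.ne' (a - 1 - 1)
      rw [hΓ, hr1, hx1]
      have hΓ0 : Real.Gamma (a - 1) ≠ 0 := (Real.Gamma_pos_of_pos (by linarith)).ne'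
      field_simp
  rw [lintegral_congr_ae key, lintegral_const_mul _ hg2,
    lintegral_gammaPDF_eq_one (by linarith) hr, mul_one]

lemma aux_gamma_inv_moment_top {a r : ℝ} (ha : 0 < a) (ha1 : a ≤ 1) (hr : 0 < r) :
    ∫⁻ x, ENNReal.ofReal x⁻¹ ∂(gammaMeasure a r) = ∞ := by
  have hΓp : 0 < Real.Gamma a := Real.Gamma_pos_of_pos ha
  have hg : Measurable (gammaPDF a r) := (measurable_gammaPDFReal a r).ennreal_ofReal
  have hf : Measurable fun x : ℝ => ENNReal.ofReal x⁻¹ := measurable_inv.ennreal_ofReal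
  rw [gammaMeasure, lintegral_withDensity_eq_lintegral_mul _ hg hf]
  rw [eq_top_iff]
  have hCne : ENNReal.ofReal (r ^ a / Real.Gamma a * Real.exp (-r)) ≠ 0 := by
    simp only [ne_eq, ENNReal.ofReal_eq_zero, not_le]
    positivity
  calc (⊤ : ℝ≥0∞) = ENNReal.ofReal (r ^ a / Real.Gamma a * Real.exp (-r)) *
        ∫⁻ x in Ioo (0:ℝ) 1, ENNReal.ofReal x⁻¹ := by
        rw [aux_lintegral_inv_Ioo_top, ENNReal.mul_top hCne]
    _ = ∫⁻ x in Ioo (0:ℝ) 1,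
          ENNReal.ofReal (r ^ a / Real.Gamma a * Real.exp (-r)) * ENNReal.ofReal x⁻¹ := by
        rw [lintegral_const_mul _ hf]
    _ ≤ ∫⁻ x in Ioo (0:ℝ) 1, (gammaPDF a r * fun x => ENNReal.ofReal x⁻¹) x := by
        refine setLIntegral_mono (hg.mul hf) (fun x hx => ?_)
        have hpdf : (0:ℝ) ≤ r ^ a / Real.Gamma a * x ^ (a-1) * Real.exp (-(r * x)) :=
          mul_nonneg (mul_nonneg (div_nonneg (Real.rpow_nonneg hr.le a) hΓp.le)
            (Real.rpow_nonneg hx.1.le _)) (Real.exp_pos _).le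
        rw [Pi.mul_apply, gammaPDF_of_nonneg hx.1.le,
          ← ENNReal.ofReal_mul hpdf, ← ENNReal.ofReal_mul (by positivity)]
        apply ENNReal.ofReal_le_ofReal
        have h1 : Real.exp (-r) ≤ Real.exp (-(r * x)) := by
          apply Real.exp_le_exp.mpr; nlinarith [hx.1, hx.2]
        have h5 : x ^ (0:ℝ) ≤ x ^ (a - 1) :=
          Real.rpow_le_rpow_of_exponent_ge hx.1 hx.2.le (by linarith)
        rw [Real.rpow_zero] at h5
        have h3 : (0:ℝ) ≤ x⁻¹ := (inv_pos.mpr hx.1).le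
        have h6 : Real.exp (-r) ≤ x ^ (a - 1) * Real.exp (-(r * x)) := by
          calc Real.exp (-r) = 1 * Real.exp (-r) := (one_mul _).symm
            _ ≤ x ^ (a - 1) * Real.exp (-(r * x)) :=
              mul_le_mul h5 h1 (Real.exp_pos _).le (by positivity)
        have hC : (0:ℝ) ≤ r ^ a / Real.Gamma a := by positivity
        have := mul_le_mul_of_nonneg_right (mul_le_mul_of_nonneg_left h6 hC) h3
        nlinarith [this]
    _ ≤ ∫⁻ x, (gammaPDF a r * fun x => ENNReal.ofReal x⁻¹) x := setLIntegral_le_lintegral _ _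

end Aux

/-- The chi-squared distribution with `n` degrees of freedom: the Gamma distribution
with shape `n/2` and rate `1/2`. -/
noncomputable def chiSquaredMeasure (n : ℕ) : Measure ℝ :=
  gammaMeasure ((n : ℝ) / 2) (1 / 2)

/-- For `M ~ χ²(n)`, the law of `M/n` (the distribution of the variance estimator from
the theoretical perspective, up to scale `σ²`) differs from the law of `n/M` (the fiducial
parameter distribution from the undertaking's perspective, up to scale `σ̂²`). -/
theorem theoretical_ne_fiducial
    {Ω : Type*} [MeasurableSpace Ω] (P : Measure Ω) [IsProbabilityMeasure P]
    (n : ℕ) (hn : 1 ≤ n) (M : Ω → ℝ) (hMmeas : Measurable M)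
    (hM : P.map M = chiSquaredMeasure n) :
    P.map (fun ω => M ω / (n : ℝ)) ≠ P.map (fun ω => (n : ℝ) / M ω) := by
  intro heq
  have hn0 : (0:ℝ) < n := by exact_mod_cast hn
  have ha : (0:ℝ) < (n:ℝ) / 2 := by positivity
  have hr : (0:ℝ) < 1/2 := by norm_num
  have hM' : P.map M = gammaMeasure ((n : ℝ)/2) (1/2) := hM
  have h1 : ∫⁻ x, ENNReal.ofReal x ∂(P.map (fun ω => M ω / n)) = 1 := by
    rw [lintegral_map ENNReal.measurable_ofReal (hMmeas.div_const _)]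
    have key : ∀ ω, ENNReal.ofReal (M ω / n)
        = ENNReal.ofReal ((n:ℝ)⁻¹) * ENNReal.ofReal (M ω) := by
      intro ω
      rw [div_eq_mul_inv, mul_comm, ENNReal.ofReal_mul (by positivity)]
    simp_rw [key]
    rw [lintegral_const_mul _ hMmeas.ennreal_ofReal]
    have h2 : ∫⁻ ω, ENNReal.ofReal (M ω) ∂P = ENNReal.ofReal ((n:ℝ)) := by
      rw [← lintegral_map ENNReal.measurable_ofReal hMmeas, hM', aux_gamma_moment ha hr,
        show ((n:ℝ)/2)/(1/2) = (n:ℝ) by ring]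
    rw [h2, ← ENNReal.ofReal_mul (by positivity), inv_mul_cancel₀ hn0.ne', ENNReal.ofReal_one]
  have hJ : ∫⁻ x, ENNReal.ofReal x ∂(P.map (fun ω => (n:ℝ) / M ω))
      = ENNReal.ofReal (n:ℝ) * ∫⁻ x, ENNReal.ofReal x⁻¹ ∂(gammaMeasure ((n:ℝ)/2) (1/2)) := by
    rw [lintegral_map ENNReal.measurable_ofReal (by have h : Measurable fun ω => (n:ℝ) / M ω := measurable_const.div hMmeas; exact h)]
    have key : ∀ ω, ENNReal.ofReal ((n:ℝ) / M ω)
        = ENNReal.ofReal ((n:ℝ)) * ENNReal.ofReal (M ω)⁻¹ := by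
      intro ω; rw [div_eq_mul_inv, ENNReal.ofReal_mul hn0.le]
    simp_rw [key]
    rw [lintegral_const_mul _ (by have h : Measurable fun ω => (M ω)⁻¹ := hMmeas.inv; exact h.ennreal_ofReal)]
    congr 1
    rw [← hM', lintegral_map measurable_inv.ennreal_ofReal hMmeas]
  have hEq := congrArg (fun μ : Measure ℝ => ∫⁻ x, ENNReal.ofReal x ∂μ) heq
  rw [h1, hJ] at hEq
  rcases le_or_gt n 2 with h2 | h2
  · rw [aux_gamma_inv_moment_top ha (by linarith [(show (n:ℝ) ≤ 2 by exact_mod_cast h2)]) hr,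
      ENNReal.mul_top (by rw [ne_eq, ENNReal.ofReal_eq_zero, not_le]; exact hn0)] at hEq
    exact ENNReal.one_ne_top hEq
  · have h3 : (1:ℝ) < (n:ℝ)/2 := by
      have : (3:ℝ) ≤ n := by exact_mod_cast h2
      linarith
    rw [aux_gamma_inv_moment h3 hr, ← ENNReal.ofReal_mul hn0.le] at hEq
    have := (ENNReal.ofReal_eq_one.mp hEq.symm)
    have hd : (0:ℝ) < (n:ℝ)/2 - 1 := by linarith
    field_simp [hd.ne'] at this
    rw [div_eq_one_iff_eq (by linarith : (n:ℝ) - 2 ≠ 0)] at this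
    linarith
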